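/- Let τ ∈ ℝⁿ have all positive entries and ξ ∈ ℝⁿ, and define componentwise γ_i(t) = τ_i · exp(t ξ_i/τ_i) for t ∈ ℝ. Then each γ_i(t) is positive, γ is twice differentiable with γ_i(0) = τ_i and γ_i'(0) = ξ_i, and it satisfies the geodesic equation γ_i''(t) = γ_i'(t)² / γ_i(t) for all t ∈ ℝ and each i. -/

import Mathlib

open Finset

lemma deriv_aexp (a c : ℝ) : deriv (fun t : ℝ => a * Real.exp (t * c))
    = fun t : ℝ => a * c * Real.exp (t * c) := by
  funext t
  have h : HasDerivAt (fun t : ℝ => a * Real.exp (t * c)) (a * c * Real.exp (t * c)) t := by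
    have := ((hasDerivAt_id t).mul_const c).exp.const_mul a
    exact this.congr_deriv (by simp; ring)
  exact h.deriv

lemma diff_aexp (a c : ℝ) (t : ℝ) : DifferentiableAt ℝ (fun t : ℝ => a * Real.exp (t * c)) t := by
  have : HasDerivAt (fun t : ℝ => a * Real.exp (t * c)) (a * c * Real.exp (t * c)) t := by
    have := ((hasDerivAt_id t).mul_const c).exp.const_mul a
    exact this.congr_deriv (by simp; ring)
  exact this.differentiableAt

/-- Texture geodesic of Proposition 2: for `τ ∈ ℝⁿ` with positive entries and `ξ ∈ ℝⁿ`, the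
componentwise curve `γᵢ(t) = τᵢ exp(t ξᵢ/τᵢ)` is positive, twice differentiable with
`γᵢ(0) = τᵢ` and `γᵢ'(0) = ξᵢ`, and satisfies the geodesic equation `γᵢ'' = (γᵢ')²/γᵢ` of
the metric `⟨ξ, η⟩_τ = ∑ᵢ ξᵢ ηᵢ/τᵢ²` on the positive orthant. -/
theorem texture_geodesic_initial_velocity
    {n : ℕ} (τ ξ : Fin n → ℝ) (hτ : ∀ i, 0 < τ i)
    (γ : Fin n → ℝ → ℝ)
    (hγ : γ = fun i (t : ℝ) => τ i * Real.exp (t * (ξ i / τ i))) :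
    ∀ i : Fin n,
      (∀ t : ℝ, 0 < γ i t) ∧
      (∀ t : ℝ, DifferentiableAt ℝ (γ i) t ∧ DifferentiableAt ℝ (deriv (γ i)) t) ∧
      γ i 0 = τ i ∧ deriv (γ i) 0 = ξ i ∧
      (∀ t : ℝ, deriv (deriv (γ i)) t = (deriv (γ i) t) ^ 2 / γ i t) := by
  intro i
  subst hγ
  have hτi := hτ i
  set c := ξ i / τ i with hc
  have h1 : deriv (fun t : ℝ => τ i * Real.exp (t * c))
      = fun t : ℝ => τ i * c * Real.exp (t * c) := deriv_aexp _ _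
  refine ⟨fun t => by positivity, fun t => ⟨diff_aexp _ _ t, ?_⟩, by simp, ?_, fun t => ?_⟩
  · rw [h1]; exact diff_aexp _ _ t
  · show deriv (fun t : ℝ => τ i * Real.exp (t * c)) 0 = ξ i
    rw [h1]
    simp only [h1, Real.exp_zero, mul_one, hc, zero_mul]
    field_simp
  · show deriv (deriv (fun t : ℝ => τ i * Real.exp (t * c))) t = (deriv (fun t : ℝ => τ i * Real.exp (t * c)) t) ^ 2 / (τ i * Real.exp (t * c))
    simp only [h1, deriv_aexp]
    have hne : τ i * Real.exp (t * c) ≠ 0 := by positivity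
    field_simp
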